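/- Let T be a p-string of length n ending with a sentinel symbol $ ∈ Σ that occurs nowhere else in T. Then an element u of PrevSub(T) is a leaf (i.e., u is not a proper prefix of any element of PrevSub(T)) if and only if u = ⟨T[k:]⟩ for some 1 ≤ k ≤ n. Consequently PrevSub(T) has exactly n leaves. -/

import Mathlib

open List

variable {σ π : Type*}

/-- The prev-encoding symbol of `w` at (0-indexed) position `i`:
constants are kept; a parameter is encoded by the distance to its
previous occurrence, or `0` if it has no previous occurrence. -/
def prevAt [DecidableEq σ] [DecidableEq π] (w : List (σ ⊕ π)) (i : ℕ) : σ ⊕ ℕ :=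
  match w[i]? with
  | some (Sum.inl a) => Sum.inl a
  | some (Sum.inr x) =>
      let s := (Finset.range i).filter (fun j => w[j]? = some (Sum.inr x))
      if h : s.Nonempty then Sum.inr (i - s.max' h) else Sum.inr 0
  | none => Sum.inr 0

/-- The prev-encoding `⟨w⟩` of a p-string `w`. -/
def prevEncode [DecidableEq σ] [DecidableEq π] (w : List (σ ⊕ π)) : List (σ ⊕ ℕ) :=
  (List.range w.length).map (prevAt w)

/-- The `k`-re-encoding `⟨u⟩ₖ` of a pv-string `u`: a numeric symbol `u[i]`
(1-indexed) is replaced by `0` whenever `u[i] ≥ i - k + 1`. -/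
def reEncode (k : ℕ) (u : List (σ ⊕ ℕ)) : List (σ ⊕ ℕ) :=
  (List.range u.length).map (fun i =>
    match u[i]? with
    | some (Sum.inl a) => Sum.inl a
    | some (Sum.inr m) => if i + 2 ≤ m + k then Sum.inr (0 : ℕ) else Sum.inr m
    | none => Sum.inr 0)

/-- The implicit suffix link `sl(u) = ⟨u[2:]⟩₁`. -/
def sl (u : List (σ ⊕ ℕ)) : List (σ ⊕ ℕ) := reEncode 1 u.tail

/-- The set of prev-encoded substrings of `T`. -/
def PrevSub [DecidableEq σ] [DecidableEq π] (T : List (σ ⊕ π)) : Set (List (σ ⊕ ℕ)) :=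
  { u | ∃ w, w <:+: T ∧ u = prevEncode w }

/-- `u` is a leaf of `PrevSub T`: it belongs to `PrevSub T` and is not a
proper prefix of any element of `PrevSub T`. -/
def IsLeaf [DecidableEq σ] [DecidableEq π] (T : List (σ ⊕ π)) (u : List (σ ⊕ ℕ)) : Prop :=
  u ∈ PrevSub T ∧ ∀ v ∈ PrevSub T, u <+: v → u = v

/-- `u` is a branching element of `PrevSub T`: two distinct one-symbol
extensions of `u` belong to `PrevSub T`. -/
def Branching [DecidableEq σ] [DecidableEq π] (T : List (σ ⊕ π)) (u : List (σ ⊕ ℕ)) : Prop :=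
  u ∈ PrevSub T ∧
    ∃ a b : σ ⊕ ℕ, a ≠ b ∧ u ++ [a] ∈ PrevSub T ∧ u ++ [b] ∈ PrevSub T

section H
variable [DecidableEq σ] [DecidableEq π]

lemma length_prevEncode (w : List (σ ⊕ π)) : (prevEncode w).length = w.length := by
  simp [prevEncode]

lemma getElem?_prevEncode (w : List (σ ⊕ π)) {i : ℕ} (hi : i < w.length) :
    (prevEncode w)[i]? = some (prevAt w i) := by
  simp [prevEncode, hi]

lemma prevAt_congr {w w' : List (σ ⊕ π)} (h : w <+: w') {i : ℕ} (hi : i < w.length) :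
    prevAt w' i = prevAt w i := by
  obtain ⟨t, rfl⟩ := h
  have hg : ∀ j, j < w.length → (w ++ t)[j]? = w[j]? := fun j hj =>
    List.getElem?_append_left hj
  unfold prevAt
  rw [hg i hi]
  rcases hw : w[i]? with _ | (a | x)
  · rfl
  · rfl
  · have heq : (Finset.range i).filter (fun j => (w ++ t)[j]? = some (Sum.inr x))
        = (Finset.range i).filter (fun j => w[j]? = some (Sum.inr x)) := by
      apply Finset.filter_congr
      intro j hj
      rw [hg j (lt_trans (Finset.mem_range.mp hj) hi)]
    simp only [heq]

lemma prevEncode_prefix {w w' : List (σ ⊕ π)} (h : w <+: w') :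
    prevEncode w <+: prevEncode w' := by
  have hl : w.length ≤ w'.length := h.length_le
  have ht : (prevEncode w').take w.length = prevEncode w := by
    unfold prevEncode
    rw [← List.map_take, List.take_range, min_eq_left hl]
    exact List.map_congr_left (fun i hi => prevAt_congr h (List.mem_range.mp hi))
  exact ht ▸ List.take_prefix _ _

lemma sentinel_pos {T' : List (σ ⊕ π)} {d : σ} (hd : Sum.inl d ∉ T') {p : ℕ}
    (hp : (T' ++ [Sum.inl d])[p]? = some (Sum.inl d)) : p = T'.length := by
  have hlt : p < T'.length + 1 := by
    by_contra hge
    push_neg at hge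
    rw [List.getElem?_eq_none (by simpa using hge)] at hp
    simp at hp
  rcases lt_or_ge p T'.length with h | h
  · rw [List.getElem?_append_left h] at hp
    exact absurd (List.mem_of_getElem? hp) hd
  · omega

lemma prevAt_inr {w : List (σ ⊕ π)} {i : ℕ} {x : π} (hw : w[i]? = some (Sum.inr x)) :
    ∃ m : ℕ, prevAt w i = Sum.inr m := by
  unfold prevAt
  rw [hw]
  dsimp only
  split
  · exact ⟨_, rfl⟩
  · exact ⟨0, rfl⟩

lemma prevAt_eq_inl_iff {w : List (σ ⊕ π)} {i : ℕ} {a : σ} :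
    prevAt w i = Sum.inl a ↔ w[i]? = some (Sum.inl a) := by
  constructor
  · intro h
    rcases hw : w[i]? with _ | (b | x)
    · unfold prevAt at h; rw [hw] at h; simp at h
    · unfold prevAt at h; rw [hw] at h; simp only [] at h
      obtain rfl : b = a := Sum.inl_injective h; rfl
    · obtain ⟨m, hm⟩ := prevAt_inr hw
      rw [hm] at h; simp at h
  · intro h
    unfold prevAt
    rw [h]


end H

/-- For a text `T = T' ++ [$]` ending with a sentinel `$ ∈ Σ` occurring nowhere
else, the leaves of `PrevSub T` are exactly the prev-encodings of the `n`
nonempty suffixes of `T`, and there are exactly `n` of them. -/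
theorem leaves_eq_suffixes [DecidableEq σ] [DecidableEq π]
    (T' : List (σ ⊕ π)) (d : σ) (T : List (σ ⊕ π))
    (hT : T = T' ++ [Sum.inl d]) (hd : Sum.inl d ∉ T') :
    (∀ u : List (σ ⊕ ℕ),
        IsLeaf T u ↔ ∃ k, 1 ≤ k ∧ k ≤ T.length ∧ u = prevEncode (T.drop (k - 1))) ∧
      {u : List (σ ⊕ ℕ) | IsLeaf T u}.ncard = T.length := by
  subst hT
  set T := T' ++ [Sum.inl d] with hTdef
  have hTn : T.length = T'.length + 1 := by simp [hTdef]
  have hiff : ∀ u : List (σ ⊕ ℕ),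
      IsLeaf T u ↔ ∃ k, 1 ≤ k ∧ k ≤ T.length ∧ u = prevEncode (T.drop (k - 1)) := by
    intro u
    constructor
    · rintro ⟨⟨w, ⟨s, t, hst⟩, rfl⟩, hleaf⟩
      rcases t with _ | ⟨c, t'⟩
      · rw [List.append_nil] at hst
        have hwne : w ≠ [] := by
          rintro rfl
          have hmem : prevEncode T ∈ PrevSub T := ⟨T, List.infix_refl T, rfl⟩
          have heq := hleaf _ hmem (by simp [prevEncode])
          have hlen := congrArg List.length heq
          rw [length_prevEncode, length_prevEncode, hTn] at hlen
          simp at hlen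
        have hwpos : 1 ≤ w.length := List.length_pos_iff.mpr hwne
        have hlenT := congrArg List.length hst
        rw [List.length_append] at hlenT
        refine ⟨s.length + 1, by omega, by omega, ?_⟩
        simp only [Nat.add_sub_cancel]
        rw [← hst, List.drop_left]
      · have hinf : w ++ [c] <:+: T := ⟨s, t', by rw [← hst]; simp⟩
        have hpre : prevEncode w <+: prevEncode (w ++ [c]) :=
          prevEncode_prefix ⟨[c], rfl⟩
        have heq := hleaf _ ⟨w ++ [c], hinf, rfl⟩ hpre
        have hlen := congrArg List.length heq
        rw [length_prevEncode, length_prevEncode] at hlen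
        simp at hlen
    · rintro ⟨k, hk1, hkn, rfl⟩
      set w := T.drop (k - 1) with hw
      have hsuff : w <:+ T := List.drop_suffix _ _
      have hLeq : w.length = T.length - (k - 1) := List.length_drop
      set L := w.length with hLdef
      have hLpos : 1 ≤ L := by omega
      have hwlast : w[L - 1]? = some (Sum.inl d) := by
        rw [hw, List.getElem?_drop]
        have he : k - 1 + (L - 1) = T'.length := by omega
        rw [hTdef, he, List.getElem?_append_right le_rfl]
        simp
      refine ⟨⟨w, hsuff.isInfix, rfl⟩, ?_⟩
      rintro v ⟨w', ⟨s, t, hst⟩, rfl⟩ hpre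
      have hlen : L ≤ w'.length := by
        have := hpre.length_le
        rwa [length_prevEncode, length_prevEncode] at this
      have hu : (prevEncode w)[L - 1]? = some (Sum.inl d) := by
        rw [getElem?_prevEncode _ (by omega)]
        exact congrArg some (prevAt_eq_inl_iff.mpr hwlast)
      have hv : (prevEncode w')[L - 1]? = some (Sum.inl d) := by
        obtain ⟨r, hr⟩ := hpre
        rw [← hr, List.getElem?_append_left (by rw [length_prevEncode]; omega)]
        exact hu
      have hw'val : w'[L - 1]? = some (Sum.inl d) := by
        rw [getElem?_prevEncode _ (by omega)] at hv
        exact prevAt_eq_inl_iff.mp (Option.some_injective _ hv)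
      have hTpos : (T' ++ [Sum.inl d])[s.length + (L - 1)]? = some (Sum.inl d) := by
        rw [← hTdef, ← hst, List.append_assoc,
          List.getElem?_append_right (Nat.le_add_right _ _)]
        rw [Nat.add_sub_cancel_left, List.getElem?_append_left (by omega)]
        exact hw'val
      have hpos := sentinel_pos hd hTpos
      have hlenT := congrArg List.length hst
      simp only [List.length_append, List.length_singleton] at hlenT
      have hw'len : w'.length = L := by omega
      exact hpre.eq_of_length (by rw [length_prevEncode, length_prevEncode, hw'len])
  refine ⟨hiff, ?_⟩
  have hset : {u : List (σ ⊕ ℕ) | IsLeaf T u}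
      = (fun k => prevEncode (T.drop (k - 1))) '' Set.Icc 1 T.length := by
    ext u
    rw [Set.mem_setOf_eq, hiff u]
    simp only [Set.mem_image, Set.mem_Icc]
    constructor
    · rintro ⟨k, h1, h2, rfl⟩; exact ⟨k, ⟨h1, h2⟩, rfl⟩
    · rintro ⟨k, ⟨h1, h2⟩, rfl⟩; exact ⟨k, h1, h2, rfl⟩
  rw [hset, Set.ncard_image_of_injOn, ← Finset.coe_Icc, Set.ncard_coe_finset,
    Nat.card_Icc]
  · omega
  · intro a ha b hb heq
    rw [Set.mem_Icc] at ha hb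
    have := congrArg List.length heq
    rw [length_prevEncode, length_prevEncode, List.length_drop, List.length_drop] at this
    omega
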